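/- arXiv:2506.19978 — 3 statements merged into one kernel-verified Lean document; each statement's English description precedes it below -/
import Mathlib

section
/- A function f : ℝ^d → ℝ (d ≥ 1) is quadratic, i.e. there exists a symmetric matrix A ∈ ℝ^{d×d} such that f(ξ) = Aξ·ξ for every ξ ∈ ℝ^d, if and only if the following three conditions hold: (a) 2-homogeneity: f(tξ) = t²f(ξ) for every ξ ∈ ℝ^d and every t ∈ ℝ; (b) parallelogram identity: f(ξ+η) + f(ξ−η) = 2f(ξ) + 2f(η) for every ξ, η ∈ ℝ^d; (c) lower bound: there exists a constant c > 0 such that f(ξ) ≥ −c|ξ|² for every ξ ∈ ℝ^d. -/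
open scoped RealInnerProductSpace

/-- An additive function `ℝ → ℝ` bounded below on `[0,1]` is linear. -/
lemma additive_bddBelow_linear (q : ℝ → ℝ) (hadd : ∀ a b, q (a + b) = q a + q b)
    (C : ℝ) (hb : ∀ t : ℝ, 0 ≤ t → t ≤ 1 → -C ≤ q t) :
    ∀ t : ℝ, q t = t * q 1 := by
  intro t
  set F : ℝ →+ ℝ := AddMonoidHom.mk' q hadd with hF
  have hq : ∀ x : ℝ, q x = F x := fun _ => rfl
  have hint : ∀ (n : ℤ) (x : ℝ), q ((n : ℝ) * x) = n * q x := by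
    intro n x
    have := map_zsmul F n x
    simpa [hq, zsmul_eq_mul] using this
  -- the deviation from linearity
  set r : ℝ → ℝ := fun x => q x - x * q 1 with hr
  have hradd : ∀ a b, r (a + b) = r a + r b := by
    intro a b; simp only [hr]; rw [hadd]; ring
  have hrint : ∀ (n : ℤ) (x : ℝ), r ((n : ℝ) * x) = n * r x := by
    intro n x; simp only [hr]; rw [hint]; ring
  have hrint' : ∀ n : ℤ, r (n : ℝ) = 0 := by
    intro n
    have := hrint n 1
    simp only [mul_one] at this
    rw [this]
    simp [hr]
  have hrsub : ∀ a b, r (a - b) = r a - r b := by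
    intro a b
    have := hradd (a - b) b
    simp only [sub_add_cancel] at this
    linarith
  -- r is bounded below on [0,1]
  have hrb : ∀ s : ℝ, 0 ≤ s → s ≤ 1 → -(C + |q 1|) ≤ r s := by
    intro s h0 h1
    have h2 := hb s h0 h1
    have h3 : s * q 1 ≤ |q 1| := by
      rcases le_or_gt (q 1) 0 with h | h
      · nlinarith [neg_abs_le (q 1)]
      · nlinarith [le_abs_self (q 1)]
    simp only [hr]; linarith
  -- key : n * r t bounded below for all n : ℤ
  have key : ∀ n : ℤ, -(C + |q 1|) ≤ (n : ℝ) * r t := by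
    intro n
    have h1 : r (Int.fract ((n : ℝ) * t)) = (n : ℝ) * r t := by
      rw [Int.fract, hrsub, hrint' , hrint]
      ring
    have := hrb (Int.fract ((n : ℝ) * t)) (Int.fract_nonneg _)
      (le_of_lt (Int.fract_lt_one _))
    rw [h1] at this
    exact this
  -- conclude r t = 0
  have hrt : r t = 0 := by
    by_contra h
    rcases lt_or_gt_of_ne h with hneg | hpos
    · obtain ⟨N, hN⟩ := exists_nat_gt ((C + |q 1|) / (-r t))
      have hrt' : 0 < -r t := by linarith
      have h2 := key N
      have h3 : (C + |q 1|) / (-r t) < (N : ℝ) := hN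
      have h4 : C + |q 1| < (N : ℝ) * (-r t) := by
        rw [div_lt_iff₀ hrt'] at h3; linarith
      push_cast at h2
      nlinarith
    · obtain ⟨N, hN⟩ := exists_nat_gt ((C + |q 1|) / r t)
      have h2 := key (-(N : ℤ))
      have h4 : C + |q 1| < (N : ℝ) * r t := by
        rw [div_lt_iff₀ hpos] at hN; linarith
      push_cast at h2
      nlinarith
  simp only [hr] at hrt
  linarith

/-- Characterisation of quadratic functions on `ℝ^d`: `f` is of the form
    `ξ ↦ Aξ·ξ` for a symmetric matrix `A` iff it is 2-homogeneous, satisfies the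
    parallelogram identity, and is bounded below by `-c|ξ|²` for some `c > 0`. -/
theorem quadratic_characterisation (d : ℕ) (hd : 1 ≤ d)
    (f : EuclideanSpace ℝ (Fin d) → ℝ) :
    (∃ A : Matrix (Fin d) (Fin d) ℝ, A.IsSymm ∧
        ∀ ξ : EuclideanSpace ℝ (Fin d), f ξ = ∑ i, (∑ j, A i j * ξ j) * ξ i) ↔
      ((∀ (ξ : EuclideanSpace ℝ (Fin d)) (t : ℝ), f (t • ξ) = t ^ 2 * f ξ) ∧
        (∀ ξ η : EuclideanSpace ℝ (Fin d),
            f (ξ + η) + f (ξ - η) = 2 * f ξ + 2 * f η) ∧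
        (∃ c : ℝ, 0 < c ∧ ∀ ξ : EuclideanSpace ℝ (Fin d), f ξ ≥ -c * ‖ξ‖ ^ 2)) := by
  constructor
  · rintro ⟨A, hAs, hA⟩
    refine ⟨?_, ?_, ?_⟩
    · -- 2-homogeneity
      intro ξ t
      rw [hA, hA, Finset.mul_sum]
      refine Finset.sum_congr rfl fun i _ => ?_
      have hs : ∀ j, (t • ξ) j = t * ξ j := fun j => rfl
      simp only [hs]
      rw [show (∑ j, A i j * (t * ξ j)) = t * ∑ j, A i j * ξ j by
        rw [Finset.mul_sum]; exact Finset.sum_congr rfl fun j _ => by ring]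
      ring
    · -- parallelogram
      intro ξ η
      rw [hA, hA, hA, hA, Finset.mul_sum, Finset.mul_sum,
        ← Finset.sum_add_distrib, ← Finset.sum_add_distrib]
      refine Finset.sum_congr rfl fun i _ => ?_
      have ha : ∀ j, (ξ + η) j = ξ j + η j := fun j => rfl
      have hsb : ∀ j, (ξ - η) j = ξ j - η j := fun j => rfl
      simp only [ha, hsb]
      rw [show (∑ j, A i j * (ξ j + η j))
            = (∑ j, A i j * ξ j) + ∑ j, A i j * η j by
        rw [← Finset.sum_add_distrib]
        exact Finset.sum_congr rfl fun j _ => by ring]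
      rw [show (∑ j, A i j * (ξ j - η j))
            = (∑ j, A i j * ξ j) - ∑ j, A i j * η j by
        rw [← Finset.sum_sub_distrib]
        exact Finset.sum_congr rfl fun j _ => by ring]
      ring
    · -- lower bound
      refine ⟨(∑ i, ∑ j, |A i j|) + 1, ?_, ?_⟩
      · have : (0:ℝ) ≤ ∑ i, ∑ j, |A i j| :=
          Finset.sum_nonneg fun i _ => Finset.sum_nonneg fun j _ => abs_nonneg _
        linarith
      · intro ξ
        have hcoord : ∀ i, |ξ i| ≤ ‖ξ‖ := by
          intro i
          rw [EuclideanSpace.norm_eq]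
          calc |ξ i| = Real.sqrt (‖ξ i‖ ^ 2) := by
                rw [Real.norm_eq_abs, Real.sqrt_sq (abs_nonneg _)]
            _ ≤ _ := Real.sqrt_le_sqrt
                (Finset.single_le_sum (fun j _ => sq_nonneg ‖ξ j‖) (Finset.mem_univ i))
        have hb : |f ξ| ≤ (∑ i, ∑ j, |A i j|) * ‖ξ‖ ^ 2 := by
          rw [hA]
          calc |∑ i, (∑ j, A i j * ξ j) * ξ i|
              ≤ ∑ i, |(∑ j, A i j * ξ j) * ξ i| := Finset.abs_sum_le_sum_abs _ _
            _ ≤ ∑ i, (∑ j, |A i j| * ‖ξ‖) * ‖ξ‖ := by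
                refine Finset.sum_le_sum fun i _ => ?_
                rw [abs_mul]
                refine mul_le_mul ?_ (hcoord i) (abs_nonneg _) ?_
                · calc |∑ j, A i j * ξ j| ≤ ∑ j, |A i j * ξ j| :=
                        Finset.abs_sum_le_sum_abs _ _
                    _ ≤ ∑ j, |A i j| * ‖ξ‖ := Finset.sum_le_sum fun j _ => by
                        rw [abs_mul]
                        exact mul_le_mul_of_nonneg_left (hcoord j) (abs_nonneg _)
                · exact Finset.sum_nonneg fun j _ =>
                    mul_nonneg (abs_nonneg _) (norm_nonneg _)
            _ = (∑ i, ∑ j, |A i j|) * ‖ξ‖ ^ 2 := by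
                rw [Finset.sum_mul]
                refine Finset.sum_congr rfl fun i _ => ?_
                rw [Finset.sum_mul, Finset.sum_mul]
                exact Finset.sum_congr rfl fun j _ => by ring
        have h1 := neg_abs_le (f ξ)
        have h2 : (0:ℝ) ≤ ‖ξ‖ ^ 2 := sq_nonneg _
        nlinarith
  · rintro ⟨h1, h2, c, hc, h3⟩
    have f0 : f 0 = 0 := by simpa using h1 0 0
    -- key lemma: f (ξ + t • η) is a quadratic polynomial in t
    have key : ∀ (ξ η : EuclideanSpace ℝ (Fin d)) (t : ℝ),
        f (ξ + t • η) = t ^ 2 * f η + t * (f (ξ + η) - f ξ - f η) + f ξ := by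
      intro ξ η t
      set q : ℝ → ℝ := fun s => f (ξ + s • η) - s ^ 2 * f η - f ξ with hqdef
      have jensen : ∀ a b : ℝ, q (a + b) + q (a - b) = 2 * q a := by
        intro a b
        have hp := h2 (ξ + a • η) (b • η)
        have e1 : ξ + a • η + b • η = ξ + (a + b) • η := by module
        have e2 : ξ + a • η - b • η = ξ + (a - b) • η := by module
        rw [e1, e2, h1 η b] at hp
        simp only [hqdef]
        linear_combination hp
      have q0 : q 0 = 0 := by simp [hqdef]
      have qdouble : ∀ a : ℝ, q (2 * a) = 2 * q a := by
        intro a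
        have h := jensen a a
        rw [sub_self, q0, ← two_mul] at h
        linarith
      have qadd : ∀ a b : ℝ, q (a + b) = q a + q b := by
        intro a b
        have h := jensen ((a + b) / 2) ((a - b) / 2)
        rw [show (a + b) / 2 + (a - b) / 2 = a by ring,
          show (a + b) / 2 - (a - b) / 2 = b by ring] at h
        have h2' := qdouble ((a + b) / 2)
        rw [show 2 * ((a + b) / 2) = a + b by ring] at h2'
        linear_combination h2' - h
      have qbd : ∀ s : ℝ, 0 ≤ s → s ≤ 1 →
          -(c * (‖ξ‖ + ‖η‖) ^ 2 + |f η| + |f ξ|) ≤ q s := by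
        intro s h0 hs1
        have hn : ‖ξ + s • η‖ ≤ ‖ξ‖ + ‖η‖ := by
          calc ‖ξ + s • η‖ ≤ ‖ξ‖ + ‖s • η‖ := norm_add_le _ _
            _ ≤ ‖ξ‖ + ‖η‖ := by
                have : ‖s • η‖ = |s| * ‖η‖ := by rw [norm_smul, Real.norm_eq_abs]
                rw [this]
                have : |s| ≤ 1 := by rw [abs_of_nonneg h0]; exact hs1
                nlinarith [norm_nonneg η]
        have hb := h3 (ξ + s • η)
        have h4 : c * ‖ξ + s • η‖ ^ 2 ≤ c * (‖ξ‖ + ‖η‖) ^ 2 := by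
          have hge := norm_nonneg (ξ + s • η)
          have hsq : ‖ξ + s • η‖ ^ 2 ≤ (‖ξ‖ + ‖η‖) ^ 2 := by nlinarith
          exact mul_le_mul_of_nonneg_left hsq hc.le
        have h5 : s ^ 2 * f η ≤ |f η| := by
          have hs2 : s ^ 2 ≤ 1 := by nlinarith
          nlinarith [le_abs_self (f η), neg_abs_le (f η), sq_nonneg s]
        have h6 : -|f ξ| ≤ -f ξ + 0 := by nlinarith [le_abs_self (f ξ)]
        simp only [hqdef]
        nlinarith [le_abs_self (f ξ)]
      have hlin := additive_bddBelow_linear q qadd _ qbd t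
      have hq1 : q 1 = f (ξ + η) - f ξ - f η := by
        simp only [hqdef, one_smul, one_pow]; ring
      rw [hq1] at hlin
      simp only [hqdef] at hlin
      linarith
    -- the polarization form
    set B : EuclideanSpace ℝ (Fin d) → EuclideanSpace ℝ (Fin d) → ℝ :=
      fun x y => (f (x + y) - f x - f y) / 2 with hB
    have Bsymm : ∀ x y, B x y = B y x := by
      intro x y; simp only [hB]; rw [add_comm x y]; ring
    have Bhom2 : ∀ x y (t : ℝ), B x (t • y) = t * B x y := by
      intro x y t
      simp only [hB]
      rw [key x y t, h1 y t]
      ring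
    have Bhom1 : ∀ x y (t : ℝ), B (t • x) y = t * B x y := by
      intro x y t
      rw [Bsymm, Bhom2, Bsymm]
    have Bsum2 : ∀ x z y, B (x + z) y + B (x - z) y = 2 * B x y := by
      intro x z y
      have e1 := h2 (x + y) z
      have e2 := h2 x z
      have r1 : x + y + z = x + z + y := by module
      have r2 : x + y - z = x - z + y := by module
      rw [r1, r2] at e1
      simp only [hB]
      linarith
    have Badd1 : ∀ u v y, B (u + v) y = B u y + B v y := by
      intro u v y
      have h := Bsum2 ((2:ℝ)⁻¹ • (u + v)) ((2:ℝ)⁻¹ • (u - v)) y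
      have hx : (2:ℝ)⁻¹ • (u + v) + (2:ℝ)⁻¹ • (u - v) = u := by module
      have hz : (2:ℝ)⁻¹ • (u + v) - (2:ℝ)⁻¹ • (u - v) = v := by module
      rw [hx, hz, Bhom1] at h
      linarith
    have B0 : ∀ y, B 0 y = 0 := by
      intro y; simp [hB, f0]
    have fB : ∀ x, f x = B x x := by
      intro x
      have hx : x + x = (2:ℝ) • x := by module
      simp only [hB]
      rw [hx, h1]
      ring
    set e : Fin d → EuclideanSpace ℝ (Fin d) := fun i => EuclideanSpace.single i 1
      with he
    have hdecomp : ∀ ξ : EuclideanSpace ℝ (Fin d), ∑ i, ξ i • e i = ξ := by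
      intro ξ
      have := (EuclideanSpace.basisFun (Fin d) ℝ).sum_repr ξ
      simpa [he, EuclideanSpace.basisFun_repr, EuclideanSpace.basisFun_apply]
        using this
    have BsumL : ∀ (y : EuclideanSpace ℝ (Fin d)) (g : Fin d → EuclideanSpace ℝ (Fin d)),
        B (∑ i, g i) y = ∑ i, B (g i) y := by
      intro y g
      classical
      induction (Finset.univ : Finset (Fin d)) using Finset.induction with
      | empty => simpa using B0 y
      | @insert a s hnot ih =>
          rw [Finset.sum_insert hnot, Finset.sum_insert hnot, Badd1, ih]
    have expand : ∀ x y, B x y = ∑ i, ∑ j, x i * (y j * B (e i) (e j)) := by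
      intro x y
      conv_lhs => rw [← hdecomp x]
      rw [BsumL]
      refine Finset.sum_congr rfl fun i _ => ?_
      rw [Bhom1]
      rw [Bsymm]
      conv_lhs => rw [← hdecomp y]
      rw [BsumL, Finset.mul_sum]
      refine Finset.sum_congr rfl fun j _ => ?_
      rw [Bhom1, Bsymm]
    refine ⟨Matrix.of (fun i j => B (e i) (e j)), ?_, ?_⟩
    · show (Matrix.of (fun i j => B (e i) (e j))).IsSymm
      rw [Matrix.IsSymm]
      ext i j
      simp only [Matrix.transpose_apply, Matrix.of_apply]
      exact Bsymm (e j) (e i)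
    · intro ξ
      rw [fB, expand ξ ξ]
      refine Finset.sum_congr rfl fun i _ => ?_
      rw [Finset.sum_mul]
      refine Finset.sum_congr rfl fun j _ => ?_
      simp only [Matrix.of_apply]
      ring
end

section
/- Let I = [a,b] ⊂ ℝ be a bounded closed interval, let (X, ‖·‖) be a Banach space, and let f : ℝ → X be a Bochner integrable function with f = 0 on ℝ \ I. For z ∈ I, k ∈ ℕ, and i ∈ ℤ set t_i^k := z + i/k. Then there exist an infinite subset K ⊆ ℕ and an ℒ¹-negligible set N ⊆ I such that for every z ∈ I \ N one has lim_{k→+∞, k∈K} Σ_{i∈ℤ} ∫_{t_i^k}^{t_{i+1}^k} ‖f(t_i^k) − f(t)‖ dt = 0. -/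
open MeasureTheory Filter
open scoped Topology ENNReal
open Set

theorem omega_tendsto (X : Type*) [NormedAddCommGroup X] (f : ℝ → X)
    (hf : Integrable f) :
    Tendsto (fun s : ℝ => ∫⁻ y : ℝ, (‖f y - f (y + s)‖₊ : ℝ≥0∞)) (𝓝 0) (𝓝 0) := by
  haveI : Fact ((1:ℝ≥0∞) ≤ 1) := ⟨le_rfl⟩
  set F : Lp X 1 (volume : Measure ℝ) := (memLp_one_iff_integrable.mpr hf).toLp f with hF
  set T : ℝ → C(ℝ, ℝ) := fun s => ContinuousMap.curry ⟨fun p => p.2 + p.1, by fun_prop⟩ s with hT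
  have hTs : ∀ s, MeasurePreserving (T s) (volume : Measure ℝ) volume := fun s =>
    measurePreserving_add_right volume s
  have hTc : Tendsto T (𝓝 0) (𝓝 (T 0)) :=
    (ContinuousMap.curry ⟨fun p : ℝ × ℝ => p.2 + p.1, by fun_prop⟩).continuous.tendsto 0
  have h1 : Tendsto (fun s => Lp.compMeasurePreserving (T s) (hTs s) F) (𝓝 0)
      (𝓝 (Lp.compMeasurePreserving (T 0) (hTs 0) F)) :=
    Filter.Tendsto.compMeasurePreservingLp tendsto_const_nhds hTc hTs (hTs 0) (by norm_num)
  have h2 : Tendsto (fun s => ‖Lp.compMeasurePreserving (T 0) (hTs 0) F -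
      Lp.compMeasurePreserving (T s) (hTs s) F‖) (𝓝 0) (𝓝 0) := by
    have := ((tendsto_const_nhds (x := Lp.compMeasurePreserving (T 0) (hTs 0) F)).sub h1).norm
    simpa using this
  have key : ∀ s : ℝ, (∫⁻ y : ℝ, (‖f y - f (y + s)‖₊ : ℝ≥0∞)) =
      ENNReal.ofReal ‖Lp.compMeasurePreserving (T 0) (hTs 0) F -
        Lp.compMeasurePreserving (T s) (hTs s) F‖ := by
    intro s
    rw [Lp.norm_def, ENNReal.ofReal_toReal (Lp.eLpNorm_ne_top _)]
    rw [eLpNorm_congr_ae (Lp.coeFn_sub _ _)]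
    have e0 := Lp.coeFn_compMeasurePreserving F (hTs 0)
    have es := Lp.coeFn_compMeasurePreserving F (hTs s)
    have ef := (memLp_one_iff_integrable.mpr hf).coeFn_toLp
    rw [eLpNorm_one_eq_lintegral_enorm]
    refine lintegral_congr_ae ?_
    filter_upwards [e0, es, ef.comp_tendsto (hTs 0).quasiMeasurePreserving.tendsto_ae,
      ef.comp_tendsto (hTs s).quasiMeasurePreserving.tendsto_ae] with y h0 hs hf0 hfs
    simp only [Pi.sub_apply, Function.comp] at *
    rw [h0, hs, hf0, hfs]
    have e1 : (T 0) y = y + 0 := rfl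
    have e2 : (T s) y = y + s := rfl
    rw [e1, e2, add_zero]; rfl
  simp only [key]
  simpa using ENNReal.tendsto_ofReal h2

theorem aemeas_lintegral_right {α β : Type*} [MeasurableSpace α] [MeasurableSpace β]
    {μ : Measure α} {ν : Measure β} [SFinite ν] {F : α × β → ℝ≥0∞}
    (hF : AEMeasurable F (μ.prod ν)) :
    AEMeasurable (fun x => ∫⁻ y, F (x, y) ∂ν) μ := by
  obtain ⟨G, hG, hFG⟩ := hF
  refine ⟨fun x => ∫⁻ y, G (x, y) ∂ν, hG.lintegral_prod_right', ?_⟩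
  filter_upwards [Measure.ae_ae_of_ae_prod hFG] with x hx
  exact lintegral_congr_ae hx

theorem e2_aemeas (X : Type*) [NormedAddCommGroup X] (f : ℝ → X)
    (hf : AEStronglyMeasurable f (volume : Measure ℝ)) :
    AEMeasurable (fun p : ℝ × ℝ => (‖f p.1 - f (p.1 + p.2)‖₊ : ℝ≥0∞))
      ((volume : Measure ℝ).prod (volume : Measure ℝ)) := by
  obtain ⟨g, hg, hfg⟩ := hf
  have h1 : StronglyMeasurable fun p : ℝ × ℝ => g p.1 :=
    hg.comp_measurable measurable_fst
  have h2 : StronglyMeasurable fun p : ℝ × ℝ => g (p.1 + p.2) :=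
    hg.comp_measurable (measurable_fst.add measurable_snd)
  refine ⟨fun p => (‖g p.1 - g (p.1 + p.2)‖₊ : ℝ≥0∞), (h1.sub h2).nnnorm.measurable.coe_nnreal_ennreal, ?_⟩
  obtain ⟨N, hNsub, hNmeas, hN⟩ := exists_measurable_superset_of_null (ae_iff.mp hfg)
  have key1 : ((volume : Measure ℝ).prod (volume : Measure ℝ)) (N ×ˢ univ) = 0 := by
    rw [Measure.prod_prod, hN, zero_mul]
  have key2 : ((volume : Measure ℝ).prod (volume : Measure ℝ)) ((fun p : ℝ × ℝ => p.1 + p.2) ⁻¹' N) = 0 := by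
    rw [Measure.prod_apply (s := (fun p : ℝ × ℝ => p.1 + p.2) ⁻¹' N) ((measurable_fst.add measurable_snd) hNmeas)]
    have : ∀ x : ℝ, (volume : Measure ℝ) (Prod.mk x ⁻¹' ((fun p : ℝ × ℝ => p.1 + p.2) ⁻¹' N)) = 0 := by
      intro x
      have : (Prod.mk x ⁻¹' ((fun p : ℝ × ℝ => p.1 + p.2) ⁻¹' N)) = (fun y => x + y) ⁻¹' N := rfl
      rw [this, measure_preimage_add]
      exact hN
    simp [this]
  have hle : ((volume : Measure ℝ).prod (volume : Measure ℝ)) (N ×ˢ univ ∪ (fun p : ℝ × ℝ => p.1 + p.2) ⁻¹' N) = 0 :=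
    le_antisymm (le_trans (measure_union_le _ _) (by rw [key1, key2, add_zero])) zero_le
  rw [Filter.EventuallyEq, ae_iff]
  refine measure_mono_null (fun p hp => ?_) hle
  simp only [mem_setOf_eq] at hp
  by_cases h1' : p.1 ∈ N
  · exact Or.inl ⟨h1', mem_univ _⟩
  · by_cases h2' : p.1 + p.2 ∈ N
    · exact Or.inr h2'
    · exfalso
      apply hp
      have e1 : f p.1 = g p.1 := by by_contra h; exact h1' (hNsub h)
      have e2 : f (p.1 + p.2) = g (p.1 + p.2) := by by_contra h; exact h2' (hNsub h)
      rw [e1, e2]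

theorem shift_lintegral (g : ℝ → ℝ≥0∞) (c : ℝ) (s : Set ℝ) :
    ∫⁻ x in s, g (x + c) = ∫⁻ y in (fun x => x + c) '' s, g y :=
  (measurePreserving_add_right volume c).setLIntegral_comp_emb
    (MeasurableEquiv.addRight c).measurableEmbedding g s

theorem shift_lintegral' (g : ℝ → ℝ≥0∞) (c : ℝ) (s : Set ℝ) :
    ∫⁻ x in s, g (c + x) = ∫⁻ y in (fun x => c + x) '' s, g y :=
  (measurePreserving_add_left volume c).setLIntegral_comp_emb
    (MeasurableEquiv.addLeft c).measurableEmbedding g s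

theorem count_bound (a b : ℝ) (hab : a ≤ b) (k : ℕ) (hk : 1 ≤ k) (y : ℝ) :
    (∑' i : ℤ, Set.indicator (Set.Icc (a + (i : ℝ) / k) (b + (i : ℝ) / k))
      (1 : ℝ → ℝ≥0∞) y) ≤ ENNReal.ofReal ((k : ℝ) * (b - a)) + 1 := by
  have hk0 : (0:ℝ) < k := by exact_mod_cast hk
  set lo : ℤ := ⌈(k : ℝ) * (y - b)⌉ with hlo
  set hi : ℤ := ⌊(k : ℝ) * (y - a)⌋ with hhi
  have hsupp : ∀ i : ℤ, i ∉ Finset.Icc lo hi →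
      Set.indicator (Set.Icc (a + (i : ℝ) / k) (b + (i : ℝ) / k)) (1 : ℝ → ℝ≥0∞) y = 0 := by
    intro i hi'
    rw [Set.indicator_of_notMem]
    intro ⟨h1, h2⟩
    apply hi'
    rw [Finset.mem_Icc]
    constructor
    · rw [hlo, Int.ceil_le]
      calc (k : ℝ) * (y - b) ≤ (k : ℝ) * ((i : ℝ) / k) := by
            apply mul_le_mul_of_nonneg_left _ hk0.le
            linarith
        _ = (i : ℝ) := by field_simp
    · rw [hhi, Int.le_floor]
      calc ((i : ℝ)) = (k : ℝ) * ((i : ℝ) / k) := by field_simp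
        _ ≤ (k : ℝ) * (y - a) := by
            apply mul_le_mul_of_nonneg_left _ hk0.le
            linarith
  rw [tsum_eq_sum hsupp]
  calc (∑ i ∈ Finset.Icc lo hi, Set.indicator (Set.Icc (a + (i : ℝ) / k) (b + (i : ℝ) / k))
        (1 : ℝ → ℝ≥0∞) y)
      ≤ ∑ _i ∈ Finset.Icc lo hi, 1 := by
        refine Finset.sum_le_sum fun i _ => ?_
        classical
        rw [Set.indicator]
        split <;> simp
    _ = (Finset.Icc lo hi).card := by simp
    _ ≤ ENNReal.ofReal ((k : ℝ) * (b - a)) + 1 := by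
        rw [Int.card_Icc]
        rcases le_or_gt (hi + 1 - lo) 0 with h | h
        · rw [Int.toNat_of_nonpos h]; simp
        · have hZ : ((hi + 1 - lo).toNat : ℤ) = hi + 1 - lo := Int.toNat_of_nonneg h.le
          have hcast : ((hi + 1 - lo).toNat : ℝ) = (hi : ℝ) + 1 - (lo : ℝ) := by
            have := congrArg (fun m : ℤ => (m : ℝ)) hZ
            push_cast at this
            linarith
          have hle : ((hi + 1 - lo).toNat : ℝ) ≤ (k : ℝ) * (b - a) + 1 := by
            rw [hcast]
            have h1 : (hi : ℝ) ≤ (k : ℝ) * (y - a) := Int.floor_le _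
            have h2 : (k : ℝ) * (y - b) ≤ (lo : ℝ) := Int.le_ceil _
            nlinarith
          calc ((hi + 1 - lo).toNat : ℝ≥0∞) = ENNReal.ofReal ((hi + 1 - lo).toNat : ℝ) := by
                rw [ENNReal.ofReal_natCast]
            _ ≤ ENNReal.ofReal ((k : ℝ) * (b - a) + 1) := ENNReal.ofReal_le_ofReal hle
            _ ≤ ENNReal.ofReal ((k : ℝ) * (b - a)) + 1 := by
                rw [ENNReal.ofReal_add (by nlinarith) zero_le_one, ENNReal.ofReal_one]

noncomputable def Phi {X : Type*} [NormedAddCommGroup X] (f : ℝ → X) (k : ℕ) (z : ℝ) : ℝ≥0∞ :=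
  ∑' i : ℤ, ∫⁻ t in Set.Ioc (z + (i : ℝ) / k) (z + ((i : ℝ) + 1) / k),
    (‖f (z + (i : ℝ) / k) - f t‖₊ : ℝ≥0∞)


theorem key_bound (X : Type*) [NormedAddCommGroup X] (a b : ℝ) (hab : a ≤ b) (f : ℝ → X)
    (hf : Integrable f) (k : ℕ) (hk : 1 ≤ k) :
    ∫⁻ z in Set.Icc a b, Phi f k z ≤
      ∫⁻ s in Set.Ioc (0:ℝ) (1 / k), (ENNReal.ofReal ((k : ℝ) * (b - a)) + 1) *
        ∫⁻ y : ℝ, (‖f y - f (y + s)‖₊ : ℝ≥0∞) := by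
  have hk0 : (0:ℝ) < k := by exact_mod_cast hk
  set e2 : ℝ × ℝ → ℝ≥0∞ := fun p => (‖f p.1 - f (p.1 + p.2)‖₊ : ℝ≥0∞) with he2def
  have he2 : AEMeasurable e2 ((volume : Measure ℝ).prod (volume : Measure ℝ)) :=
    e2_aemeas X f hf.1
  set μI := (volume : Measure ℝ).restrict (Set.Icc a b) with hμI
  set ν := (volume : Measure ℝ).restrict (Set.Ioc (0:ℝ) (1 / k)) with hν
  set M : ℝ≥0∞ := ENNReal.ofReal ((k : ℝ) * (b - a)) + 1 with hM
  -- Joint measurability of shifted integrands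
  have hFi : ∀ i : ℤ, AEMeasurable (fun p : ℝ × ℝ => e2 (p.1 + (i : ℝ) / k, p.2)) (μI.prod ν) := by
    intro i
    have hmp : MeasurePreserving (fun p : ℝ × ℝ => (p.1 + (i : ℝ) / k, p.2))
        ((volume : Measure ℝ).prod (volume : Measure ℝ))
        ((volume : Measure ℝ).prod (volume : Measure ℝ)) :=
      (measurePreserving_add_right volume _).prod (MeasurePreserving.id _)
    have := he2.comp_quasiMeasurePreserving hmp.quasiMeasurePreserving
    exact this.mono_measure (by rw [hμI, hν, Measure.prod_restrict]; exact Measure.restrict_le_self)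
  -- change of variables in each term
  have hAi : ∀ (i : ℤ) (z : ℝ),
      (∫⁻ t in Set.Ioc (z + (i : ℝ) / k) (z + ((i : ℝ) + 1) / k),
        (‖f (z + (i : ℝ) / k) - f t‖₊ : ℝ≥0∞)) =
      ∫⁻ s in Set.Ioc (0:ℝ) (1 / k), e2 (z + (i : ℝ) / k, s) := by
    intro i z
    have h1 : z + ((i : ℝ) + 1) / k = (z + (i : ℝ) / k) + 1 / k := by
      field_simp
      ring
    rw [h1]
    generalize z + (i : ℝ) / k = y
    have := shift_lintegral' (fun t => (‖f y - f t‖₊ : ℝ≥0∞)) y (Set.Ioc (0:ℝ) (1 / k))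
    rw [Set.image_const_add_Ioc, add_zero] at this
    rw [← this]
  -- step 1: tsum out
  have step1 : ∫⁻ z in Set.Icc a b, Phi f k z =
      ∑' i : ℤ, ∫⁻ z, (∫⁻ s, e2 (z + (i : ℝ) / k, s) ∂ν) ∂μI := by
    simp only [Phi, hAi]
    exact lintegral_tsum fun i => aemeas_lintegral_right (hFi i)
  -- step 2+3: swap and shift
  have step23 : ∀ i : ℤ, (∫⁻ z, (∫⁻ s, e2 (z + (i : ℝ) / k, s) ∂ν) ∂μI) =
      ∫⁻ s, (∫⁻ y in Set.Icc (a + (i : ℝ) / k) (b + (i : ℝ) / k), e2 (y, s)) ∂ν := by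
    intro i
    rw [lintegral_lintegral_swap (hFi i)]
    congr 1
    ext s
    have := shift_lintegral (fun y => e2 (y, s)) ((i : ℝ) / k) (Set.Icc a b)
    rw [Set.image_add_const_Icc] at this
    exact this
  -- step 4: pull tsum inside s-integral
  have step4 : (∑' i : ℤ, ∫⁻ s, (∫⁻ y in Set.Icc (a + (i : ℝ) / k) (b + (i : ℝ) / k), e2 (y, s)) ∂ν) =
      ∫⁻ s, (∑' i : ℤ, ∫⁻ y in Set.Icc (a + (i : ℝ) / k) (b + (i : ℝ) / k), e2 (y, s)) ∂ν := by
    refine (lintegral_tsum fun i => ?_).symm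
    have : AEMeasurable (fun q : ℝ × ℝ => e2 (q.2 + (i : ℝ) / k, q.1)) (ν.prod μI) := by
      have := (hFi i).prod_swap
      exact this
    have h2 := aemeas_lintegral_right this
    refine h2.congr ?_
    refine Filter.Eventually.of_forall fun s => ?_
    have := shift_lintegral (fun y => e2 (y, s)) ((i : ℝ) / k) (Set.Icc a b)
    rw [Set.image_add_const_Icc] at this
    exact this
  -- step 5: pointwise counting bound
  have step5 : ∀ s : ℝ,
      (∑' i : ℤ, ∫⁻ y in Set.Icc (a + (i : ℝ) / k) (b + (i : ℝ) / k), e2 (y, s)) ≤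
      M * ∫⁻ y : ℝ, e2 (y, s) := by
    intro s
    have hg : AEMeasurable (fun y => e2 (y, s)) (volume : Measure ℝ) := by
      have h1 : AEStronglyMeasurable (fun y : ℝ => f (y + s)) volume :=
        hf.1.comp_quasiMeasurePreserving
          (measurePreserving_add_right volume s).quasiMeasurePreserving
      exact (hf.1.sub h1).nnnorm.aemeasurable.coe_nnreal_ennreal
    have hMne : M ≠ ∞ := ENNReal.add_ne_top.mpr ⟨ENNReal.ofReal_ne_top, ENNReal.one_ne_top⟩
    have heq : ∀ i : ℤ, (∫⁻ y in Set.Icc (a + (i : ℝ) / k) (b + (i : ℝ) / k), e2 (y, s)) =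
        ∫⁻ y, Set.indicator (Set.Icc (a + (i : ℝ) / k) (b + (i : ℝ) / k))
          (fun y => e2 (y, s)) y := fun i =>
      (lintegral_indicator measurableSet_Icc _).symm
    calc (∑' i : ℤ, ∫⁻ y in Set.Icc (a + (i : ℝ) / k) (b + (i : ℝ) / k), e2 (y, s))
        = ∑' i : ℤ, ∫⁻ y, Set.indicator (Set.Icc (a + (i : ℝ) / k) (b + (i : ℝ) / k))
            (fun y => e2 (y, s)) y := by simp only [heq]
      _ = ∫⁻ y, ∑' i : ℤ, Set.indicator (Set.Icc (a + (i : ℝ) / k) (b + (i : ℝ) / k))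
            (fun y => e2 (y, s)) y :=
          (lintegral_tsum fun i => hg.indicator measurableSet_Icc).symm
      _ ≤ ∫⁻ y, M * e2 (y, s) := by
          refine lintegral_mono fun y => ?_
          have h1 : ∀ i : ℤ, Set.indicator (Set.Icc (a + (i : ℝ) / k) (b + (i : ℝ) / k))
              (fun y => e2 (y, s)) y
              = Set.indicator (Set.Icc (a + (i : ℝ) / k) (b + (i : ℝ) / k))
                  (1 : ℝ → ℝ≥0∞) y * e2 (y, s) := by
            intro i
            classical
            rw [Set.indicator, Set.indicator]
            split <;> simp
          calc (∑' i : ℤ, Set.indicator (Set.Icc (a + (i : ℝ) / k) (b + (i : ℝ) / k))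
                (fun y => e2 (y, s)) y)
              = (∑' i : ℤ, Set.indicator (Set.Icc (a + (i : ℝ) / k) (b + (i : ℝ) / k))
                  (1 : ℝ → ℝ≥0∞) y) * e2 (y, s) := by
                rw [tsum_congr h1, ENNReal.tsum_mul_right]
            _ ≤ M * e2 (y, s) := mul_le_mul_left (count_bound a b hab k hk y) _
      _ = M * ∫⁻ y, e2 (y, s) := lintegral_const_mul' _ _ hMne
  calc ∫⁻ z in Set.Icc a b, Phi f k z
      = ∑' i : ℤ, ∫⁻ z, (∫⁻ s, e2 (z + (i : ℝ) / k, s) ∂ν) ∂μI := step1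
    _ = ∑' i : ℤ, ∫⁻ s, (∫⁻ y in Set.Icc (a + (i : ℝ) / k) (b + (i : ℝ) / k), e2 (y, s)) ∂ν := by
        simp only [step23]
    _ = ∫⁻ s, (∑' i : ℤ, ∫⁻ y in Set.Icc (a + (i : ℝ) / k) (b + (i : ℝ) / k), e2 (y, s)) ∂ν := step4
    _ ≤ ∫⁻ s, (M * ∫⁻ y : ℝ, e2 (y, s)) ∂ν := lintegral_mono fun s => step5 s

-- AEMeasurability of Phi
theorem Phi_aemeas (X : Type*) [NormedAddCommGroup X] (a b : ℝ) (f : ℝ → X)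
    (hf : Integrable f) (k : ℕ) (hk : 1 ≤ k) :
    AEMeasurable (Phi f k) ((volume : Measure ℝ).restrict (Set.Icc a b)) := by
  have hk0 : (0:ℝ) < k := by exact_mod_cast hk
  set e2 : ℝ × ℝ → ℝ≥0∞ := fun p => (‖f p.1 - f (p.1 + p.2)‖₊ : ℝ≥0∞) with he2def
  have he2 : AEMeasurable e2 ((volume : Measure ℝ).prod (volume : Measure ℝ)) :=
    e2_aemeas X f hf.1
  have hFi : ∀ i : ℤ, AEMeasurable (fun p : ℝ × ℝ => e2 (p.1 + (i : ℝ) / k, p.2))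
      (((volume : Measure ℝ).restrict (Set.Icc a b)).prod
        ((volume : Measure ℝ).restrict (Set.Ioc (0:ℝ) (1 / k)))) := by
    intro i
    have hmp : MeasurePreserving (fun p : ℝ × ℝ => (p.1 + (i : ℝ) / k, p.2))
        ((volume : Measure ℝ).prod (volume : Measure ℝ))
        ((volume : Measure ℝ).prod (volume : Measure ℝ)) :=
      (measurePreserving_add_right volume _).prod (MeasurePreserving.id _)
    have := he2.comp_quasiMeasurePreserving hmp.quasiMeasurePreserving
    exact this.mono_measure (by rw [Measure.prod_restrict]; exact Measure.restrict_le_self)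
  have hAi : ∀ (i : ℤ) (z : ℝ),
      (∫⁻ t in Set.Ioc (z + (i : ℝ) / k) (z + ((i : ℝ) + 1) / k),
        (‖f (z + (i : ℝ) / k) - f t‖₊ : ℝ≥0∞)) =
      ∫⁻ s in Set.Ioc (0:ℝ) (1 / k), e2 (z + (i : ℝ) / k, s) := by
    intro i z
    have h1 : z + ((i : ℝ) + 1) / k = (z + (i : ℝ) / k) + 1 / k := by
      field_simp
      ring
    rw [h1]
    generalize z + (i : ℝ) / k = y
    have := shift_lintegral' (fun t => (‖f y - f t‖₊ : ℝ≥0∞)) y (Set.Ioc (0:ℝ) (1 / k))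
    rw [Set.image_const_add_Ioc, add_zero] at this
    rw [← this]
  have : ∀ i : ℤ, AEMeasurable (fun z => ∫⁻ t in Set.Ioc (z + (i : ℝ) / k)
      (z + ((i : ℝ) + 1) / k), (‖f (z + (i : ℝ) / k) - f t‖₊ : ℝ≥0∞))
      ((volume : Measure ℝ).restrict (Set.Icc a b)) := by
    intro i
    refine (aemeas_lintegral_right (hFi i)).congr ?_
    exact Filter.Eventually.of_forall fun z => (hAi i z).symm
  exact AEMeasurable.ennreal_tsum this

theorem G_eq {X : Type*} [NormedAddCommGroup X] (f : ℝ → X) (hf : Integrable f)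
    (z : ℝ) (m : ℕ) (hm : 1 ≤ m) (hΦ : Phi f m z ≠ ∞) :
    (∑' i : ℤ, ∫ t in (z + (i : ℝ) / m)..(z + ((i : ℝ) + 1) / m),
      ‖f (z + (i : ℝ) / m) - f t‖) = (Phi f m z).toReal := by
  have hm0 : (0:ℝ) < m := by exact_mod_cast hm
  have hle : ∀ i : ℤ, z + (i : ℝ) / m ≤ z + ((i : ℝ) + 1) / m := by
    intro i
    have : (i : ℝ) / m ≤ ((i : ℝ) + 1) / m := by
      gcongr
      linarith
    linarith
  have hterm : ∀ i : ℤ,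
      (∫ t in (z + (i : ℝ) / m)..(z + ((i : ℝ) + 1) / m), ‖f (z + (i : ℝ) / m) - f t‖) =
      (∫⁻ t in Set.Ioc (z + (i : ℝ) / m) (z + ((i : ℝ) + 1) / m),
        (‖f (z + (i : ℝ) / m) - f t‖₊ : ℝ≥0∞)).toReal := by
    intro i
    rw [intervalIntegral.integral_of_le (hle i)]
    have hA : AEStronglyMeasurable (fun t : ℝ => ‖f (z + (i : ℝ) / m) - f t‖)
        ((volume : Measure ℝ).restrict
          (Set.Ioc (z + (i : ℝ) / m) (z + ((i : ℝ) + 1) / m))) :=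
      ((aestronglyMeasurable_const.sub hf.1).norm.congr
        (Filter.Eventually.of_forall fun t => rfl)).restrict
    rw [integral_eq_lintegral_of_nonneg_ae
      (Filter.Eventually.of_forall fun t => norm_nonneg _) hA]
    congr 1
    refine lintegral_congr fun t => ?_
    rw [ofReal_norm_eq_enorm]; rfl
  rw [tsum_congr hterm, Phi]
  exact (ENNReal.tsum_toReal_eq fun i => ne_top_of_le_ne_top hΦ (ENNReal.le_tsum i)).symm

/-- Approximation by Riemann sums: for a Bochner integrable `f : ℝ → X` vanishing
    outside `[a,b]`, there are an infinite set `K ⊆ ℕ` and a Lebesgue-null set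
    `N ⊆ [a,b]` such that for every `z ∈ [a,b] \ N`, setting `tᵏᵢ = z + i/k`,
    `∑_{i ∈ ℤ} ∫_{tᵏᵢ}^{tᵏᵢ₊₁} ‖f(tᵏᵢ) − f(t)‖ dt → 0` as `k → ∞` along `K`. -/
theorem riemann_sums_ae (X : Type*) [NormedAddCommGroup X] [NormedSpace ℝ X]
    [CompleteSpace X] (a b : ℝ) (hab : a ≤ b) (f : ℝ → X)
    (hf : Integrable f) (hf0 : ∀ t ∉ Set.Icc a b, f t = 0) :
    ∃ K : Set ℕ, K.Infinite ∧ ∃ N ⊆ Set.Icc a b, volume N = 0 ∧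
      ∀ z ∈ Set.Icc a b \ N,
        Tendsto
          (fun k : ℕ => ∑' i : ℤ,
            ∫ t in (z + (i : ℝ) / k)..(z + ((i : ℝ) + 1) / k),
              ‖f (z + (i : ℝ) / k) - f t‖)
          (atTop ⊓ 𝓟 K) (𝓝 0) := by
  set ω : ℝ → ℝ≥0∞ := fun s => ∫⁻ y : ℝ, (‖f y - f (y + s)‖₊ : ℝ≥0∞) with hω
  have hωt := omega_tendsto X f hf
  set C : ℝ≥0∞ := ENNReal.ofReal (b - a) + 1 with hC
  have hCne : C ≠ ∞ := ENNReal.add_ne_top.mpr ⟨ENNReal.ofReal_ne_top, ENNReal.one_ne_top⟩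
  -- Step C : find arbitrarily large k with small bound
  have C1 : ∀ (ε : ℝ≥0∞), ε ≠ 0 → ∀ n₀ : ℕ, ∃ m : ℕ, n₀ < m ∧
      ∫⁻ z in Set.Icc a b, Phi f m z ≤ ε := by
    intro ε hε n₀
    set ε' : ℝ≥0∞ := ε / C with hε'
    have hε'0 : 0 < ε' := ENNReal.div_pos hε hCne
    have hev : ∀ᶠ s in 𝓝[>] (0:ℝ), ω s < ε' :=
      (hωt.eventually_lt_const hε'0).filter_mono nhdsWithin_le_nhds
    obtain ⟨δ, hδmem, hδ⟩ := mem_nhdsGT_iff_exists_Ioc_subset.mp hev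
    have hδ0 : (0:ℝ) < δ := hδmem
    set m : ℕ := max (n₀ + 1) (max 1 ⌈1/δ⌉₊) with hm
    have hm1 : 1 ≤ m := le_trans (le_max_left _ _) (le_max_right _ _)
    have hm0 : (0:ℝ) < m := by exact_mod_cast hm1
    have hmδ : 1 / (m:ℝ) ≤ δ := by
      have h1 : (1:ℝ)/δ ≤ m := by
        calc (1:ℝ)/δ ≤ ⌈1/δ⌉₊ := Nat.le_ceil _
          _ ≤ m := by exact_mod_cast le_trans (le_max_right _ _) (le_max_right _ _)
      rw [div_le_iff₀ hm0]
      rw [div_le_iff₀ hδ0] at h1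
      linarith
    refine ⟨m, lt_of_lt_of_le (Nat.lt_succ_self n₀) (le_max_left _ _), ?_⟩
    set M : ℝ≥0∞ := ENNReal.ofReal ((m : ℝ) * (b - a)) + 1 with hM
    have hMC : M * ENNReal.ofReal (1/(m:ℝ)) ≤ C := by
      rw [hM, add_mul, one_mul, ← ENNReal.ofReal_mul (by nlinarith)]
      have e1 : (m : ℝ) * (b - a) * (1/(m:ℝ)) = b - a := by field_simp
      rw [e1, hC]
      gcongr
      calc ENNReal.ofReal (1/(m:ℝ)) ≤ ENNReal.ofReal 1 := by
            apply ENNReal.ofReal_le_ofReal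
            rw [div_le_one hm0]
            exact_mod_cast hm1
        _ = 1 := ENNReal.ofReal_one
    calc ∫⁻ z in Set.Icc a b, Phi f m z
        ≤ ∫⁻ s in Set.Ioc (0:ℝ) (1 / m), M * ω s := key_bound X a b hab f hf m hm1
      _ ≤ ∫⁻ _s in Set.Ioc (0:ℝ) (1 / m), M * ε' := by
          refine lintegral_mono_ae ?_
          filter_upwards [ae_restrict_mem measurableSet_Ioc] with s hs
          refine mul_le_mul_right (le_of_lt (hδ ⟨hs.1, le_trans hs.2 hmδ⟩)) M
      _ = M * ε' * ENNReal.ofReal (1/(m:ℝ)) := by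
          rw [setLIntegral_const, Real.volume_Ioc, sub_zero]
      _ = (M * ENNReal.ofReal (1/(m:ℝ))) * ε' := by ring
      _ ≤ C * ε' := mul_le_mul_left hMC _
      _ = ε := by
          rw [hε', ENNReal.mul_div_cancel' (by simp [hC]) (fun h => absurd h hCne)]
  -- choose the sequence
  have C2 : ∀ (n n₀ : ℕ), ∃ m : ℕ, n₀ < m ∧
      ∫⁻ z in Set.Icc a b, Phi f m z ≤ (2:ℝ≥0∞)⁻¹ ^ n := fun n n₀ =>
    C1 ((2:ℝ≥0∞)⁻¹ ^ n) (by simp) n₀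
  choose g hg1 hg2 using C2
  set κ : ℕ → ℕ := fun n => Nat.rec (g 0 0) (fun n ih => g (n + 1) ih) n with hκ
  have hκ0 : ∀ n, κ (n + 1) = g (n + 1) (κ n) := fun n => rfl
  have hκmono : StrictMono κ := strictMono_nat_of_lt_succ fun n => by
    rw [hκ0]; exact hg1 (n + 1) (κ n)
  have hκbound : ∀ n, ∫⁻ z in Set.Icc a b, Phi f (κ n) z ≤ (2:ℝ≥0∞)⁻¹ ^ n := by
    intro n
    cases n with
    | zero => exact hg2 0 0
    | succ n => rw [hκ0]; exact hg2 (n + 1) (κ n)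
  have hκ1 : ∀ n, 1 ≤ κ n := fun n => le_trans (hg1 0 0) (hκmono.monotone (Nat.zero_le n))
  refine ⟨Set.range κ, Set.infinite_range_of_injective hκmono.injective, ?_⟩
  -- Borel-Cantelli
  have hsum : ∫⁻ z in Set.Icc a b, (∑' n : ℕ, Phi f (κ n) z) ≠ ∞ := by
    rw [lintegral_tsum fun n => Phi_aemeas X a b f hf (κ n) (hκ1 n)]
    refine ne_top_of_le_ne_top ?_ (ENNReal.tsum_le_tsum hκbound)
    rw [ENNReal.tsum_geometric]
    simp
  have hae : ∀ᵐ z ∂((volume : Measure ℝ).restrict (Set.Icc a b)),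
      Tendsto (fun n => Phi f (κ n) z) atTop (𝓝 0) := by
    have h1 : ∀ᵐ z ∂((volume : Measure ℝ).restrict (Set.Icc a b)),
        (∑' n : ℕ, Phi f (κ n) z) < ∞ :=
      ae_lt_top' (AEMeasurable.ennreal_tsum fun n => Phi_aemeas X a b f hf (κ n) (hκ1 n)) hsum
    filter_upwards [h1] with z hz
    exact ENNReal.tendsto_atTop_zero_of_tsum_ne_top hz.ne
  set P : ℝ → Prop := fun z => Tendsto (fun n => Phi f (κ n) z) atTop (𝓝 0) with hP
  refine ⟨{z | ¬ P z} ∩ Set.Icc a b, Set.inter_subset_right, ?_, ?_⟩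
  · have := ae_iff.mp hae
    rw [Measure.restrict_apply' measurableSet_Icc] at this
    exact this
  · rintro z ⟨hzI, hzN⟩
    have hPz : P z := by
      by_contra h
      exact hzN ⟨h, hzI⟩
    rw [NormedAddCommGroup.tendsto_nhds_zero]
    intro ε hε
    have hev : ∀ᶠ n in atTop, Phi f (κ n) z < ENNReal.ofReal ε :=
      hPz.eventually_lt_const (ENNReal.ofReal_pos.mpr hε)
    obtain ⟨n₀, hn₀⟩ := eventually_atTop.mp hev
    rw [eventually_inf_principal]
    filter_upwards [eventually_ge_atTop (κ n₀)] with m hm hmK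
    obtain ⟨j, rfl⟩ := hmK
    have hj : n₀ ≤ j := hκmono.le_iff_le.mp hm
    have hΦ : Phi f (κ j) z < ENNReal.ofReal ε := hn₀ j hj
    have hΦne : Phi f (κ j) z ≠ ∞ := ne_top_of_lt (lt_of_lt_of_le hΦ le_top)
    rw [G_eq f hf z (κ j) (hκ1 j) hΦne, Real.norm_eq_abs,
      abs_of_nonneg ENNReal.toReal_nonneg]
    calc (Phi f (κ j) z).toReal < (ENNReal.ofReal ε).toReal := by
          rw [ENNReal.toReal_lt_toReal hΦne ENNReal.ofReal_ne_top]
          exact hΦ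
      _ = ε := ENNReal.toReal_ofReal hε.le
end

section
/- Let I = [a,b] and J = [c,d] be bounded closed intervals of ℝ, let (X, ‖·‖) be a Banach space, and let f_k : ℝ × ℝ → X be a sequence of Bochner integrable functions with f_k = 0 on (ℝ×ℝ) \ (I×J). For z₁ ∈ I, k ∈ ℕ, and i ∈ ℤ set t_i^k := z₁ + i/k. Assume that (i) lim_{k→+∞} f_k(t, z₂) = 0 for ℒ¹-a.e. t ∈ I and ℒ¹-a.e. z₂ ∈ J, and (ii) there exists an integrable function g : ℝ → [0,+∞) such that ‖f_k(t, z₂)‖ ≤ g(t) for ℒ¹-a.e. t ∈ I, ℒ¹-a.e. z₂ ∈ J, and every k ∈ ℕ. Then there exist an ℒ²-negligible set N ⊆ I×J and an infinite subset K ⊆ ℕ such that for every (z₁, z₂) ∈ (I×J) \ N one has lim_{k→+∞, k∈K} (1/k) Σ_{i∈ℤ} ‖f_k(t_i^k, z₂)‖ = 0. Moreover, for every ε > 0 there exists a Borel set A_ε ⊆ I×J with ℒ²((I×J) \ A_ε) ≤ ε such that this limit holds uniformly for (z₁, z₂) ∈ A_ε. -/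
open MeasureTheory Filter
open scoped Topology

open Set
open scoped ENNReal NNReal

lemma aux_meas_tendsto_zero {α : Type*} [MeasurableSpace α] {u : ℕ → α → ℝ}
    (hu : ∀ n, Measurable (u n)) :
    MeasurableSet {p | Tendsto (fun n => u n p) atTop (𝓝 (0:ℝ))} := by
  have h : {p | Tendsto (fun n => u n p) atTop (𝓝 (0:ℝ))}
      = ⋂ (q : ℕ), ⋃ (N : ℕ), ⋂ (n : ℕ), ⋂ (_ : N ≤ n),
          {p | |u n p| < ((q:ℝ)+1)⁻¹} := by
    ext p
    simp only [mem_iInter, mem_iUnion, mem_setOf_eq]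
    constructor
    · intro h q
      obtain ⟨N, hN⟩ := (Metric.tendsto_atTop.1 h) (((q:ℝ)+1)⁻¹) (by positivity)
      exact ⟨N, fun n hn => by simpa [Real.dist_eq] using hN n hn⟩
    · intro h
      rw [Metric.tendsto_atTop]
      intro ε hε
      obtain ⟨q, hq⟩ := exists_nat_one_div_lt hε
      obtain ⟨N, hN⟩ := h q
      refine ⟨N, fun n hn => ?_⟩
      rw [Real.dist_eq, sub_zero]
      calc |u n p| < ((q:ℝ)+1)⁻¹ := hN n hn
        _ < ε := by rwa [one_div] at hq
  rw [h]
  exact MeasurableSet.iInter fun q => MeasurableSet.iUnion fun N =>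
    MeasurableSet.iInter fun n => MeasurableSet.iInter fun _ =>
      measurableSet_lt ((hu n).abs) measurable_const

lemma aux_period_sum (φ : ℝ → ℝ≥0∞) (hφ : Measurable φ) {T : ℝ} (hT : 0 < T) (u : ℝ) :
    ∫⁻ z in Set.Ico u (u + T), ∑' i : ℤ, φ (z + i * T) = ∫⁻ x, φ x := by
  rw [lintegral_tsum (f := fun (i : ℤ) (z : ℝ) => φ (z + i * T))
      (fun i => (hφ.comp (measurable_add_const ((i:ℝ)*T))).aemeasurable)]
  have h1 : ∀ i : ℤ, (∫⁻ z in Set.Ico u (u + T), φ (z + i * T))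
      = ∫⁻ x in Set.Ico (u + i * T) (u + T + i * T), φ x := by
    intro i
    have hmp := measurePreserving_add_right (volume : Measure ℝ) ((i:ℝ)*T)
    have hpre : (fun x : ℝ => x + (i:ℝ) * T) ⁻¹' Set.Ico (u + i * T) (u + T + i * T)
        = Set.Ico u (u + T) := by
      ext z
      simp only [mem_preimage, mem_Ico]
      constructor <;> intro h <;> exact ⟨by linarith [h.1], by linarith [h.2]⟩
    conv_rhs => rw [← hmp.map_eq]
    rw [Measure.restrict_map (measurable_add_const _) measurableSet_Ico,
        lintegral_map hφ (measurable_add_const _), hpre]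
  simp_rw [h1]
  rw [← lintegral_iUnion (fun i => measurableSet_Ico) ?disj]
  case disj =>
    have hdisj : ∀ i j : ℤ, i < j →
        Disjoint (Set.Ico (u + i * T) (u + T + i * T)) (Set.Ico (u + j * T) (u + T + j * T)) := by
      intro i j h
      apply Set.disjoint_left.2
      intro x hx hx'
      have hij1 : (i:ℝ) + 1 ≤ (j:ℝ) := by exact_mod_cast h
      nlinarith [hx.2, hx'.1, hT.le]
    intro i j hij
    simp only [Function.onFun]
    rcases lt_or_gt_of_ne hij with h | h
    · exact hdisj i j h
    · exact (hdisj j i h).symm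
  have huniv : (⋃ i : ℤ, Set.Ico (u + i * T) (u + T + i * T)) = Set.univ := by
    ext x
    simp only [mem_iUnion, mem_Ico, mem_univ, iff_true]
    refine ⟨⌊(x - u)/T⌋, ?_, ?_⟩
    · have h1 : (⌊(x - u)/T⌋ : ℝ) ≤ (x - u)/T := Int.floor_le _
      have := (le_div_iff₀ hT).1 h1
      linarith
    · have h2 : (x - u)/T < ⌊(x - u)/T⌋ + 1 := Int.lt_floor_add_one _
      have := (div_lt_iff₀ hT).1 h2
      nlinarith
  rw [huniv, Measure.restrict_univ]

lemma aux_cover (φ : ℝ → ℝ≥0∞) (hφ : Measurable φ) {T : ℝ} (hT : 0 < T) (u : ℝ) (m : ℕ) :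
    ∫⁻ z in Set.Ico u (u + m * T), ∑' i : ℤ, φ (z + i * T) = m * ∫⁻ x, φ x := by
  induction m with
  | zero => simp
  | succ m ih =>
    have key : Set.Ico u (u + (m + 1 : ℕ) * T)
        = Set.Ico u (u + m * T) ∪ Set.Ico (u + m * T) (u + m * T + T) := by
      rw [Set.Ico_union_Ico_eq_Ico (by nlinarith [hT.le]) (by linarith)]
      congr 1
      push_cast
      ring
    rw [key, lintegral_union measurableSet_Ico ?disj, ih]
    · have := aux_period_sum φ hφ hT (u + m * T)
      rw [this]
      push_cast
      ring
    case disj =>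
      apply Set.disjoint_left.2
      intro x hx hx'
      exact absurd hx'.1 (not_le.2 hx.2)

lemma aux_inner (φ : ℝ → ℝ≥0∞) (hφ : Measurable φ) {k : ℕ} (hk : 1 ≤ k) {a b : ℝ}
    (hab : a ≤ b) :
    ∫⁻ z in Set.Icc a b, ∑' i : ℤ, φ (z + i * ((k:ℝ)⁻¹))
      ≤ (⌈(b - a) * k⌉₊ + 1 : ℕ) * ∫⁻ x, φ x := by
  have hk0 : (0:ℝ) < k := by exact_mod_cast hk
  have hT : (0:ℝ) < (k:ℝ)⁻¹ := by positivity
  set m : ℕ := ⌈(b - a) * k⌉₊ + 1 with hm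
  have hsub : Set.Icc a b ⊆ Set.Ico a (a + m * (k:ℝ)⁻¹) := by
    intro x hx
    refine ⟨hx.1, lt_of_le_of_lt hx.2 ?_⟩
    have h1 : (b - a) * k ≤ (⌈(b - a) * k⌉₊ : ℝ) := Nat.le_ceil _
    have h2 : ((⌈(b - a) * k⌉₊ : ℝ) + 1) = (m : ℝ) := by push_cast [hm]; ring
    have h3 : (k:ℝ) * (k:ℝ)⁻¹ = 1 := mul_inv_cancel₀ (ne_of_gt hk0)
    nlinarith
  calc ∫⁻ z in Set.Icc a b, ∑' i : ℤ, φ (z + i * ((k:ℝ)⁻¹))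
      ≤ ∫⁻ z in Set.Ico a (a + m * (k:ℝ)⁻¹), ∑' i : ℤ, φ (z + i * ((k:ℝ)⁻¹)) :=
        lintegral_mono_set hsub
    _ = m * ∫⁻ x, φ x := aux_cover φ hφ hT a m

/-- Riemann sums of a sequence of functions converging to `0` in `L¹`, with an
    additional parameter: for Bochner integrable `f_k : ℝ × ℝ → X` vanishing
    outside `I × J = [a,b] × [c,d]`, converging pointwise a.e. to `0` and
    dominated by an integrable `g`, there are a null set `N ⊆ I × J` and an
    infinite `K ⊆ ℕ` such that `(1/k) ∑_{i∈ℤ} ‖f_k(z₁ + i/k, z₂)‖ → 0` along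
    `k ∈ K` for every `(z₁,z₂) ∈ (I×J) \ N`; moreover for every `ε > 0` the
    convergence is uniform on a Borel set `Aε ⊆ I × J` with
    `ℒ²((I×J) \ Aε) ≤ ε`. -/
theorem riemann_sums_two_parameters (X : Type*) [NormedAddCommGroup X]
    [NormedSpace ℝ X] [CompleteSpace X]
    (a b c d : ℝ) (hab : a ≤ b) (hcd : c ≤ d)
    (f : ℕ → ℝ × ℝ → X)
    (hint : ∀ k, Integrable (f k))
    (hsupp : ∀ k, ∀ p : ℝ × ℝ, p ∉ Set.Icc a b ×ˢ Set.Icc c d → f k p = 0)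
    (hconv : ∀ᵐ t ∂(volume.restrict (Set.Icc a b)),
      ∀ᵐ z₂ ∂(volume.restrict (Set.Icc c d)),
        Tendsto (fun k : ℕ => f k (t, z₂)) atTop (𝓝 0))
    (g : ℝ → ℝ) (hg : Integrable g) (hg0 : ∀ t, 0 ≤ g t)
    (hdom : ∀ᵐ t ∂(volume.restrict (Set.Icc a b)),
      ∀ᵐ z₂ ∂(volume.restrict (Set.Icc c d)), ∀ k : ℕ, ‖f k (t, z₂)‖ ≤ g t) :
    ∃ N ⊆ Set.Icc a b ×ˢ Set.Icc c d, volume N = 0 ∧ ∃ K : Set ℕ, K.Infinite ∧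
      (∀ p ∈ (Set.Icc a b ×ˢ Set.Icc c d) \ N,
        Tendsto
          (fun k : ℕ => (k : ℝ)⁻¹ * ∑' i : ℤ, ‖f k (p.1 + (i : ℝ) / k, p.2)‖)
          (atTop ⊓ 𝓟 K) (𝓝 0)) ∧
      ∀ ε : ℝ, 0 < ε → ∃ Aε ⊆ Set.Icc a b ×ˢ Set.Icc c d, MeasurableSet Aε ∧
        volume ((Set.Icc a b ×ˢ Set.Icc c d) \ Aε) ≤ ENNReal.ofReal ε ∧
        TendstoUniformlyOn
          (fun (k : ℕ) (p : ℝ × ℝ) =>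
            (k : ℝ)⁻¹ * ∑' i : ℤ, ‖f k (p.1 + (i : ℝ) / k, p.2)‖)
          (fun _ => 0) (atTop ⊓ 𝓟 K) Aε := by
  classical
  set I : Set ℝ := Set.Icc a b with hI
  set J : Set ℝ := Set.Icc c d with hJ
  set IJ : Set (ℝ × ℝ) := I ×ˢ J with hIJ
  have hIJmeas : MeasurableSet IJ := (measurableSet_Icc.prod measurableSet_Icc)
  have hIJfin : volume IJ ≠ ∞ := by
    rw [hIJ, show (volume : Measure (ℝ × ℝ)) = (volume : Measure ℝ).prod volume from
      Measure.volume_eq_prod ℝ ℝ, Measure.prod_prod, hI, hJ, Real.volume_Icc, Real.volume_Icc]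
    exact ENNReal.mul_ne_top ENNReal.ofReal_ne_top ENNReal.ofReal_ne_top
  set μ : Measure (ℝ × ℝ) := volume.restrict IJ with hμ
  -- measurable representatives
  set f' : ℕ → ℝ × ℝ → X := fun k => (hint k).1.mk (f k) with hf'
  have hf'm : ∀ k, StronglyMeasurable (f' k) := fun k => (hint k).1.stronglyMeasurable_mk
  have hff' : ∀ k, f k =ᵐ[volume] f' k := fun k => (hint k).1.ae_eq_mk
  set g' : ℝ → ℝ := hg.1.mk g with hg'
  have hg'm : StronglyMeasurable g' := hg.1.stronglyMeasurable_mk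
  have hgg' : g =ᵐ[volume] g' := hg.1.ae_eq_mk
  -- the ENNReal-valued sums and real versions
  set Fe : ℕ → ℝ × ℝ → ℝ≥0∞ :=
    fun k p => ∑' i : ℤ, (‖f' k (p.1 + (i : ℝ) / k, p.2)‖₊ : ℝ≥0∞) with hFe
  have hFe_meas : ∀ k, Measurable (Fe k) := by
    intro k
    apply Measurable.ennreal_tsum
    intro i
    have : Measurable fun p : ℝ × ℝ => (p.1 + (i : ℝ) / k, p.2) :=
      (measurable_fst.add_const _).prodMk measurable_snd
    exact ((hf'm k).comp_measurable this).nnnorm.measurable.coe_nnreal_ennreal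
  set F' : ℕ → ℝ × ℝ → ℝ := fun k p => (k : ℝ)⁻¹ * (Fe k p).toReal with hF'
  have hF'meas : ∀ k, Measurable (F' k) := fun k =>
    measurable_const.mul (hFe_meas k).ennreal_toReal
  have hF'nonneg : ∀ k p, 0 ≤ F' k p := fun k p =>
    mul_nonneg (by positivity) ENNReal.toReal_nonneg
  -- the bad set where f and f' differ at shifted points
  set Bset : Set (ℝ × ℝ) :=
    ⋃ (k : ℕ) (i : ℤ), {p : ℝ × ℝ |
      f k (p.1 + (i : ℝ) / k, p.2) ≠ f' k (p.1 + (i : ℝ) / k, p.2)} with hBset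
  have hBnull : volume Bset = 0 := by
    refine measure_iUnion_null fun k => measure_iUnion_null fun i => ?_
    obtain ⟨D, hD, hDmeas, hDnull⟩ := exists_measurable_superset_of_null
      (ae_iff.1 (hff' k) : volume {q : ℝ × ℝ | f k q ≠ f' k q} = 0)
    have hmp : MeasurePreserving (fun p : ℝ × ℝ => (p.1 + (i : ℝ) / k, p.2))
        volume volume := by
      rw [Measure.volume_eq_prod]
      exact (measurePreserving_add_right volume ((i : ℝ) / k)).prod
        (MeasurePreserving.id volume)
    refine measure_mono_null (fun p hp => ?_) (le_antisymm (le_of_le_of_eq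
      (le_of_eq (hmp.measure_preimage hDmeas.nullMeasurableSet)) hDnull) zero_le :
      volume ((fun p : ℝ × ℝ => (p.1 + (i : ℝ) / k, p.2)) ⁻¹' D) = 0)
    exact hD hp
  -- outside Bset the target function equals F'
  have hgoalF : ∀ p ∉ Bset, ∀ k : ℕ,
      (k : ℝ)⁻¹ * ∑' i : ℤ, ‖f k (p.1 + (i : ℝ) / k, p.2)‖ = F' k p := by
    intro p hp k
    have hpk : ∀ i : ℤ, f k (p.1 + (i : ℝ) / k, p.2) = f' k (p.1 + (i : ℝ) / k, p.2) := by
      intro i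
      by_contra hne
      exact hp (Set.mem_iUnion.2 ⟨k, Set.mem_iUnion.2 ⟨i, hne⟩⟩)
    have : (∑' i : ℤ, ‖f k (p.1 + (i : ℝ) / k, p.2)‖) = (Fe k p).toReal := by
      rw [ENNReal.tsum_toReal_eq (fun i => ENNReal.coe_ne_top)]
      refine tsum_congr fun i => ?_
      rw [hpk i, ENNReal.coe_toReal, coe_nnnorm]
    rw [this]
  -- μ as a product of restricted measures
  have hres : μ = (volume.restrict I).prod (volume.restrict J) := by
    rw [hμ, hIJ, Measure.prod_restrict, ← Measure.volume_eq_prod]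
  -- transfer a.e. facts to f' and g'
  have hff'' : ∀ᵐ t ∂(volume.restrict I), ∀ᵐ z₂ ∂(volume.restrict J),
      ∀ k : ℕ, f k (t, z₂) = f' k (t, z₂) := by
    have base : ∀ k : ℕ, ∀ᵐ t ∂(volume.restrict I), ∀ᵐ z₂ ∂(volume.restrict J),
        f k (t, z₂) = f' k (t, z₂) := by
      intro k
      have h1 : ∀ᵐ q ∂((volume : Measure ℝ).prod volume), f k q = f' k q := by
        rw [← Measure.volume_eq_prod]; exact hff' k
      have h2 := Measure.ae_ae_of_ae_prod h1
      filter_upwards [ae_restrict_of_ae h2] with t ht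
      exact ae_restrict_of_ae ht
    filter_upwards [ae_all_iff.2 base] with t ht
    exact ae_all_iff.2 ht
  have hgg'' : ∀ᵐ t ∂(volume.restrict I), g t = g' t := ae_restrict_of_ae hgg'
  -- the good set
  set Sset : Set (ℝ × ℝ) := {p | Tendsto (fun k => f' k p) atTop (𝓝 0) ∧
      ∀ k : ℕ, ‖f' k p‖ ≤ g' p.1} with hSset
  have hSmeas : MeasurableSet Sset := by
    have h1 : MeasurableSet {p : ℝ × ℝ | Tendsto (fun k => f' k p) atTop (𝓝 0)} := by
      have he : {p : ℝ × ℝ | Tendsto (fun k => f' k p) atTop (𝓝 0)}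
          = {p : ℝ × ℝ | Tendsto (fun k => ‖f' k p‖) atTop (𝓝 (0:ℝ))} := by
        ext p
        exact tendsto_zero_iff_norm_tendsto_zero
      rw [he]
      exact aux_meas_tendsto_zero fun n => (hf'm n).norm.measurable
    have h2 : MeasurableSet {p : ℝ × ℝ | ∀ k : ℕ, ‖f' k p‖ ≤ g' p.1} := by
      rw [Set.setOf_forall]
      exact MeasurableSet.iInter fun k =>
        measurableSet_le (hf'm k).norm.measurable
          (hg'm.measurable.comp measurable_fst)
    exact h1.inter h2
  have hS : ∀ᵐ p ∂μ, p ∈ Sset := by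
    rw [ae_iff, hres]
    have hcompl : {p : ℝ × ℝ | ¬ p ∈ Sset} = Ssetᶜ := rfl
    rw [hcompl, Measure.measure_prod_null hSmeas.compl]
    filter_upwards [hconv, hdom, hff'', hgg''] with t h1 h2 h3 h4
    have : ∀ᵐ z₂ ∂(volume.restrict J), (t, z₂) ∈ Sset := by
      filter_upwards [h1, h2, h3] with z₂ hc hd he
      refine ⟨?_, fun k => ?_⟩
      · have : (fun k => f' k (t, z₂)) = fun k => f k (t, z₂) :=
          funext fun k => (he k).symm
        rw [this]
        exact hc
      · rw [← he k, ← h4]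
        exact hd k
    have := ae_iff.1 this
    exact this
  -- total integral of ‖f' k‖ tends to 0
  set Tk : ℕ → ℝ≥0∞ := fun k => ∫⁻ p, (‖f' k p‖₊ : ℝ≥0∞) with hTk
  have hTkμ : ∀ k, Tk k = ∫⁻ p, (‖f' k p‖₊ : ℝ≥0∞) ∂μ := by
    intro k
    have e1 : (∫⁻ p, (‖f' k p‖₊ : ℝ≥0∞)) = ∫⁻ p, (‖f k p‖₊ : ℝ≥0∞) :=
      lintegral_congr_ae ((hff' k).mono fun p hp => by simp only [hp])
    have e2 : (∫⁻ p, (‖f k p‖₊ : ℝ≥0∞)) = ∫⁻ p, (‖f k p‖₊ : ℝ≥0∞) ∂μ := by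
      rw [hμ, ← lintegral_indicator hIJmeas]
      congr 1
      funext p
      by_cases hp : p ∈ IJ
      · rw [Set.indicator_of_mem hp]
      · rw [Set.indicator_of_notMem hp, hsupp k p hp]
        simp
    have e3 : (∫⁻ p, (‖f k p‖₊ : ℝ≥0∞) ∂μ) = ∫⁻ p, (‖f' k p‖₊ : ℝ≥0∞) ∂μ :=
      lintegral_congr_ae ((ae_restrict_of_ae (hff' k)).mono fun p hp => by simp only [hp])
    show (∫⁻ p, (‖f' k p‖₊ : ℝ≥0∞)) = _
    rw [e1, e2, e3]
  have hTk0 : Tendsto Tk atTop (𝓝 0) := by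
    have hdct := tendsto_lintegral_of_dominated_convergence (μ := μ)
      (F := fun k p => (‖f' k p‖₊ : ℝ≥0∞)) (f := fun _ => 0)
      (fun p => ENNReal.ofReal (g' p.1))
      (fun k => (hf'm k).nnnorm.measurable.coe_nnreal_ennreal)
      (fun k => hS.mono fun p hp => by
        calc (‖f' k p‖₊ : ℝ≥0∞) = ENNReal.ofReal ‖f' k p‖ :=
            (ofReal_norm _).symm
          _ ≤ ENNReal.ofReal (g' p.1) := ENNReal.ofReal_le_ofReal (hp.2 k))
      ?_
      (hS.mono fun p hp => by
        have h1 : Tendsto (fun k => ‖f' k p‖) atTop (𝓝 (0:ℝ)) :=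
          tendsto_zero_iff_norm_tendsto_zero.1 hp.1
        have h2 := ENNReal.tendsto_ofReal h1
        rw [ENNReal.ofReal_zero] at h2
        simp only [← enorm_eq_nnnorm, ← ofReal_norm]
        exact h2)
    · simpa using hdct.congr fun k => (hTkμ k).symm
    · -- finiteness of the bound
      have hg'int : Integrable g' := hg.congr hgg'
      rw [hres, lintegral_prod (f := fun p : ℝ × ℝ => ENNReal.ofReal (g' p.1))
        ((hg'm.measurable.comp measurable_fst).ennreal_ofReal).aemeasurable]
      have : ∀ t : ℝ, (∫⁻ z₂ in J, ENNReal.ofReal (g' t))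
          = ENNReal.ofReal (g' t) * volume J := fun t => by
        rw [lintegral_const, Measure.restrict_apply_univ]
      simp_rw [this]
      rw [lintegral_mul_const _ hg'm.measurable.ennreal_ofReal]
      refine ENNReal.mul_ne_top ?_ (by rw [hJ, Real.volume_Icc]; exact ENNReal.ofReal_ne_top)
      refine ne_of_lt (lt_of_le_of_lt ?_ hg'int.2)
      refine le_trans (lintegral_mono' Measure.restrict_le_self le_rfl) ?_
      exact lintegral_ofReal_le_lintegral_enorm g'
  -- main estimate : ∫⁻ ‖F' k‖ ∂μ ≤ C * Tk k for k ≥ 1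
  have hAk : ∀ k : ℕ, 1 ≤ k →
      (∫⁻ p, (‖F' k p‖₊ : ℝ≥0∞) ∂μ) ≤ ENNReal.ofReal (b - a + 2) * Tk k := by
    intro k hk
    have hk0 : (0:ℝ) < k := by exact_mod_cast hk
    set m : ℕ := ⌈(b - a) * k⌉₊ + 1 with hm
    have step2 : (∫⁻ p, Fe k p ∂μ) ≤ (m : ℝ≥0∞) * Tk k := by
      rw [hres, lintegral_prod_symm _ (hFe_meas k).aemeasurable]
      have hsecmeas : ∀ z₂ : ℝ, Measurable fun t => (‖f' k (t, z₂)‖₊ : ℝ≥0∞) := by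
        intro z₂
        exact ((hf'm k).comp_measurable
          (measurable_id.prodMk measurable_const)).nnnorm.measurable.coe_nnreal_ennreal
      have inner : ∀ z₂ : ℝ, (∫⁻ z₁ in I, Fe k (z₁, z₂))
          ≤ (m : ℝ≥0∞) * ∫⁻ t, (‖f' k (t, z₂)‖₊ : ℝ≥0∞) := by
        intro z₂
        have := aux_inner (fun t => (‖f' k (t, z₂)‖₊ : ℝ≥0∞)) (hsecmeas z₂) hk hab
        have heq : ∀ z₁ : ℝ, Fe k (z₁, z₂)
            = ∑' i : ℤ, (‖f' k (z₁ + (i:ℝ) * (k:ℝ)⁻¹, z₂)‖₊ : ℝ≥0∞) := by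
          intro z₁
          refine tsum_congr fun i => ?_
          rw [div_eq_mul_inv]
        calc (∫⁻ z₁ in I, Fe k (z₁, z₂))
            = ∫⁻ z₁ in I, ∑' i : ℤ, (‖f' k (z₁ + (i:ℝ) * (k:ℝ)⁻¹, z₂)‖₊ : ℝ≥0∞) := by
              exact lintegral_congr fun z₁ => heq z₁
          _ ≤ (m : ℝ≥0∞) * ∫⁻ t, (‖f' k (t, z₂)‖₊ : ℝ≥0∞) := by
              rw [hI, hm]
              exact_mod_cast aux_inner (fun t => (‖f' k (t, z₂)‖₊ : ℝ≥0∞)) (hsecmeas z₂) hk hab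
      have hprod_meas : Measurable fun p : ℝ × ℝ => (‖f' k p‖₊ : ℝ≥0∞) :=
        (hf'm k).nnnorm.measurable.coe_nnreal_ennreal
      calc (∫⁻ z₂ in J, ∫⁻ z₁ in I, Fe k (z₁, z₂))
          ≤ ∫⁻ z₂ in J, (m : ℝ≥0∞) * ∫⁻ t, (‖f' k (t, z₂)‖₊ : ℝ≥0∞) :=
            lintegral_mono fun z₂ => inner z₂
        _ = (m : ℝ≥0∞) * ∫⁻ z₂ in J, ∫⁻ t, (‖f' k (t, z₂)‖₊ : ℝ≥0∞) := by
            rw [lintegral_const_mul _ hprod_meas.lintegral_prod_left']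
        _ ≤ (m : ℝ≥0∞) * ∫⁻ z₂, ∫⁻ t, (‖f' k (t, z₂)‖₊ : ℝ≥0∞) :=
            mul_le_mul_right (lintegral_mono' Measure.restrict_le_self le_rfl) _
        _ = (m : ℝ≥0∞) * Tk k := by
            rw [← lintegral_prod_symm _ hprod_meas.aemeasurable, hTk,
              ← Measure.volume_eq_prod]
    have step1 : (∫⁻ p, (‖F' k p‖₊ : ℝ≥0∞) ∂μ)
        ≤ ENNReal.ofReal ((k:ℝ)⁻¹) * ∫⁻ p, Fe k p ∂μ := by
      rw [← lintegral_const_mul _ (hFe_meas k)]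
      refine lintegral_mono fun p => ?_
      calc (‖F' k p‖₊ : ℝ≥0∞) = ENNReal.ofReal (F' k p) := by
            rw [← enorm_eq_nnnorm, ← ofReal_norm, Real.norm_of_nonneg (hF'nonneg k p)]
        _ = ENNReal.ofReal ((k:ℝ)⁻¹) * ENNReal.ofReal ((Fe k p).toReal) := by
            rw [hF']
            exact ENNReal.ofReal_mul (by positivity)
        _ ≤ ENNReal.ofReal ((k:ℝ)⁻¹) * Fe k p :=
            mul_le_mul_right ENNReal.ofReal_toReal_le _
    have harith : ENNReal.ofReal ((k:ℝ)⁻¹) * (m : ℝ≥0∞) ≤ ENNReal.ofReal (b - a + 2) := by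
      rw [← ENNReal.ofReal_natCast m, ← ENNReal.ofReal_mul (by positivity)]
      refine ENNReal.ofReal_le_ofReal ?_
      have h1 : (⌈(b - a) * k⌉₊ : ℝ) < (b - a) * k + 1 :=
        Nat.ceil_lt_add_one (by nlinarith)
      have hm' : (m : ℝ) < (b - a) * k + 2 := by
        rw [hm]; push_cast; linarith
      have hkinv : (k:ℝ)⁻¹ * k = 1 := inv_mul_cancel₀ (ne_of_gt hk0)
      have hkinv1 : (k:ℝ)⁻¹ ≤ 1 := by
        rw [inv_le_one_iff₀]; right; exact_mod_cast hk
      have hkinvpos : (0:ℝ) < (k:ℝ)⁻¹ := by positivity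
      nlinarith
    calc (∫⁻ p, (‖F' k p‖₊ : ℝ≥0∞) ∂μ)
        ≤ ENNReal.ofReal ((k:ℝ)⁻¹) * ∫⁻ p, Fe k p ∂μ := step1
      _ ≤ ENNReal.ofReal ((k:ℝ)⁻¹) * ((m : ℝ≥0∞) * Tk k) := mul_le_mul_right step2 _
      _ = (ENNReal.ofReal ((k:ℝ)⁻¹) * (m : ℝ≥0∞)) * Tk k := by ring
      _ ≤ ENNReal.ofReal (b - a + 2) * Tk k := mul_le_mul_left harith _
  -- L¹ convergence of F'
  have hLp : Tendsto (fun k => eLpNorm (F' k) 1 μ) atTop (𝓝 0) := by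
    simp_rw [eLpNorm_one_eq_lintegral_enorm]
    have hC : Tendsto (fun k => ENNReal.ofReal (b - a + 2) * Tk k) atTop (𝓝 0) := by
      have := ENNReal.Tendsto.const_mul (a := ENNReal.ofReal (b - a + 2)) hTk0 (Or.inr ENNReal.ofReal_ne_top)
      simpa using this
    refine tendsto_of_tendsto_of_tendsto_of_le_of_le' tendsto_const_nhds hC
      (Eventually.of_forall fun k => zero_le) ?_
    filter_upwards [eventually_ge_atTop 1] with k hk
    exact hAk k hk
  have htim : TendstoInMeasure μ F' atTop (fun _ => (0:ℝ)) := by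
    refine tendstoInMeasure_of_tendsto_eLpNorm one_ne_zero
      (fun n => (hF'meas n).aestronglyMeasurable) aestronglyMeasurable_const ?_
    have hfe0 : ∀ n : ℕ, (F' n - fun _ => (0:ℝ)) = F' n := fun n => by
      funext p; simp
    have hfe : (fun n => eLpNorm (F' n - fun _ => (0:ℝ)) 1 μ)
        = fun n => eLpNorm (F' n) 1 μ := funext fun n => by rw [hfe0 n]
    rw [hfe]
    exact hLp
  obtain ⟨ns, hns, hae⟩ := htim.exists_seq_tendsto_ae
  -- the subsequence filter
  set K : Set ℕ := Set.range ns with hK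
  have hKinf : K.Infinite := Set.infinite_range_of_injective hns.injective
  have hmap : Filter.map ns atTop = atTop ⊓ 𝓟 K := by
    apply le_antisymm
    · exact le_inf hns.tendsto_atTop (le_principal_iff.2
        (mem_map.2 (univ_mem' fun n => Set.mem_range_self n)))
    · intro s hs
      rw [mem_map, mem_atTop_sets] at hs
      obtain ⟨M, hM⟩ := hs
      have : {k : ℕ | ns M ≤ k} ∩ K ∈ atTop ⊓ 𝓟 K :=
        inter_mem_inf (mem_atTop (ns M)) (mem_principal_self K)
      refine mem_of_superset this ?_
      rintro x ⟨hx1, n, rfl⟩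
      exact hM n ((hns.le_iff_le).1 hx1)
  -- the exceptional sets
  have hEnull : volume ({p : ℝ × ℝ |
      ¬ Tendsto (fun i => F' (ns i) p) atTop (𝓝 (0:ℝ))} ∩ IJ) = 0 := by
    have := ae_iff.1 hae
    rwa [hμ, Measure.restrict_apply' hIJmeas] at this
  set Bad : Set (ℝ × ℝ) := toMeasurable volume Bset ∪ toMeasurable volume
    ({p : ℝ × ℝ | ¬ Tendsto (fun i => F' (ns i) p) atTop (𝓝 (0:ℝ))} ∩ IJ) with hBad
  have hBadMeas : MeasurableSet Bad :=
    (measurableSet_toMeasurable _ _).union (measurableSet_toMeasurable _ _)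
  have hBadNull : volume Bad = 0 := by
    refine measure_union_null ?_ ?_
    · rw [measure_toMeasurable]; exact hBnull
    · rw [measure_toMeasurable]; exact hEnull
  have hnotBad : ∀ p ∈ IJ, p ∉ Bad →
      (∀ k : ℕ, (k : ℝ)⁻¹ * ∑' i : ℤ, ‖f k (p.1 + (i : ℝ) / k, p.2)‖ = F' k p) ∧
      Tendsto (fun i => F' (ns i) p) atTop (𝓝 (0:ℝ)) := by
    intro p hpIJ hp
    have h1 : p ∉ Bset := fun h => hp (Set.mem_union_left _ (subset_toMeasurable _ _ h))
    have h2 : Tendsto (fun i => F' (ns i) p) atTop (𝓝 (0:ℝ)) := by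
      by_contra h
      exact hp (Set.mem_union_right _ (subset_toMeasurable _ _ ⟨h, hpIJ⟩))
    exact ⟨hgoalF p h1, h2⟩
  refine ⟨Bad ∩ IJ, Set.inter_subset_right, ?_, K, hKinf, ?_, ?_⟩
  · exact measure_mono_null Set.inter_subset_left hBadNull
  · -- pointwise convergence
    rintro p ⟨hpIJ, hpN⟩
    have hp : p ∉ Bad := fun h => hpN ⟨h, hpIJ⟩
    obtain ⟨heq, hconv'⟩ := hnotBad p hpIJ hp
    rw [← hmap, tendsto_map'_iff]
    have : ((fun k : ℕ => (k : ℝ)⁻¹ * ∑' i : ℤ, ‖f k (p.1 + (i : ℝ) / k, p.2)‖) ∘ ns)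
        = fun i => F' (ns i) p := funext fun i => heq (ns i)
    rw [this]
    exact hconv'
  · -- uniform convergence via Egorov
    intro ε hε
    have hsmeas : MeasurableSet (IJ \ Bad) := hIJmeas.diff hBadMeas
    have hsfin : volume (IJ \ Bad) ≠ ∞ :=
      fun h => hIJfin (eq_top_mono (measure_mono Set.diff_subset) h)
    obtain ⟨t, hts, htmeas, htvol, hunif⟩ :=
      tendstoUniformlyOn_of_ae_tendsto (μ := volume)
        (f := fun n p => F' (ns n) p) (g := fun _ => (0:ℝ))
        (fun n => (hF'meas (ns n)).stronglyMeasurable) stronglyMeasurable_const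
        hsmeas hsfin
        (Eventually.of_forall fun p hp => (hnotBad p hp.1 hp.2).2) hε
    refine ⟨(IJ \ Bad) \ t, fun p hp => hp.1.1, (hsmeas.diff htmeas), ?_, ?_⟩
    · have hsub : IJ \ ((IJ \ Bad) \ t) ⊆ Bad ∪ t := by
        rintro p ⟨hpIJ, hp⟩
        by_cases hb : p ∈ Bad
        · exact Or.inl hb
        · by_cases ht : p ∈ t
          · exact Or.inr ht
          · exact absurd ⟨⟨hpIJ, hb⟩, ht⟩ hp
      calc volume (IJ \ ((IJ \ Bad) \ t)) ≤ volume (Bad ∪ t) := measure_mono hsub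
        _ ≤ volume Bad + volume t := measure_union_le _ _
        _ ≤ 0 + ENNReal.ofReal ε := by
            exact add_le_add (le_of_eq hBadNull) htvol
        _ = ENNReal.ofReal ε := zero_add _
    · -- transfer uniform convergence along the subsequence filter
      rw [← hmap]
      intro u hu
      have := hunif u hu
      rw [eventually_map]
      filter_upwards [this] with n hn p hp
      have heq := (hnotBad p hp.1.1 hp.1.2).1 (ns n)
      rw [heq]
      exact hn p hp
end
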